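/- Let Ω be a nonempty bounded open subset of ℝ^d (d ≥ 1), equipped with Lebesgue measure. Let a > 0, b, c ∈ ℝ and r ∈ (0,1). Then there exists a constant C, depending only on the Lebesgue measure |Ω|, a, b, c and r, such that every p ∈ L²(Ω) with p ≥ 0 almost everywhere in Ω satisfying both ‖p − m(p)‖_{L²(Ω)} ≤ a ‖p‖_{L²(Ω)}^r + b and ∫_Ω p^r dx ≤ c, also satisfies ‖p‖_{L²(Ω)} ≤ C. -/

import Mathlib

open MeasureTheory
open scoped ENNReal NNReal

/-- Lemma 2.2: an `L²` bound for a nonnegative function whose distance to its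
mean value is controlled by a sublinear power of its `L²` norm and whose
`r`-th power has bounded integral. -/
theorem stmt0 (d : ℕ) (hd : 1 ≤ d) (Ω : Set (EuclideanSpace ℝ (Fin d)))
    (hΩne : Ω.Nonempty) (hΩopen : IsOpen Ω) (hΩbdd : Bornology.IsBounded Ω)
    (a b c r : ℝ) (ha : 0 < a) (hr : r ∈ Set.Ioo (0 : ℝ) 1) :
    ∃ C : ℝ, ∀ p : EuclideanSpace ℝ (Fin d) → ℝ,
      MemLp p 2 (volume.restrict Ω) →
      (∀ᵐ x ∂(volume.restrict Ω), 0 ≤ p x) →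
      (eLpNorm (fun x => p x - (volume Ω).toReal⁻¹ * ∫ y in Ω, p y) 2
          (volume.restrict Ω)).toReal
        ≤ a * ((eLpNorm p 2 (volume.restrict Ω)).toReal) ^ r + b →
      (∫ x in Ω, p x ^ r) ≤ c →
      (eLpNorm p 2 (volume.restrict Ω)).toReal ≤ C := by
  obtain ⟨hr0, hr1⟩ := hr
  set μ := volume.restrict Ω with hμdef
  have hΩpos : 0 < volume Ω := hΩopen.measure_pos volume hΩne
  have hΩfin : volume Ω < ⊤ := hΩbdd.measure_lt_top
  have hμuniv : μ Set.univ = volume Ω := by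
    simp [hμdef, Measure.restrict_apply_univ]
  haveI : IsFiniteMeasure μ := ⟨by rw [hμuniv]; exact hΩfin⟩
  have hμne : μ ≠ 0 := by
    rw [← Measure.measure_univ_ne_zero, hμuniv]; exact hΩpos.ne'
  set V : ℝ := (volume Ω).toReal with hVdef
  have hVpos : 0 < V := ENNReal.toReal_pos hΩpos.ne' hΩfin.ne
  have h2r : 0 < 2 - r := by linarith
  have h1r : 0 < 1 - r := by linarith
  set t : ℝ := 2 * (1 - r) / (2 - r) with htdef
  have ht0 : 0 < t := by positivity
  have ht1 : t < 1 := by rw [htdef, div_lt_one h2r]; linarith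
  set c₀ : ℝ := max c 0 with hc₀def
  have hc₀ : 0 ≤ c₀ := le_max_right _ _
  set K : ℝ := V ^ ((1 : ℝ)/2) * V⁻¹ * c₀ ^ ((2 - r)⁻¹) with hKdef
  have hK0 : 0 ≤ K := by positivity
  set s : ℝ := max r t with hsdef
  have hs0 : 0 < s := lt_max_of_lt_left hr0
  have hs1 : s < 1 := max_lt hr1 ht1
  set E : ℝ := a + |b| + K with hEdef
  have hE0 : 0 < E := by positivity
  refine ⟨max 1 (E ^ ((1 - s)⁻¹)), ?_⟩
  intro p hp hpnn hmean hintr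
  set S := eLpNorm p 2 μ with hSdef
  have hSfin : S ≠ ⊤ := hp.2.ne
  set N : ℝ := S.toReal with hNdef
  have hN0 : 0 ≤ N := ENNReal.toReal_nonneg
  have hpint : Integrable p μ := hp.integrable (by norm_num)
  set I : ℝ := ∫ y in Ω, p y with hIdef
  have hI0 : 0 ≤ I := integral_nonneg_of_ae hpnn
  -- the mean value
  set M : ℝ := (volume Ω).toReal⁻¹ * I with hMdef
  have hM0 : 0 ≤ M := by
    rw [hMdef]; exact mul_nonneg (by positivity) hI0
  -- Step B : Hölder interpolation bound on I
  set f : EuclideanSpace ℝ (Fin d) → ℝ≥0∞ := fun x => ENNReal.ofReal (p x) with hfdef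
  have hfmeas : AEMeasurable f μ :=
    ENNReal.measurable_ofReal.comp_aemeasurable hp.1.aemeasurable
  set u : ℝ := r / (2 - r) with hudef
  have hu0 : 0 ≤ u := by positivity
  have h1u0 : 0 ≤ 1 - u := by
    rw [hudef, sub_nonneg, div_le_one h2r]; linarith
  have hconj : (2 - r).HolderConjugate ((2 - r)/(1 - r)) := by
    rw [Real.holderConjugate_iff_eq_conjExponent (by linarith)]
    congr 1
    ring
  have hIeq : ENNReal.ofReal I = ∫⁻ x, f x ∂μ :=
    ofReal_integral_eq_lintegral_ofReal hpint hpnn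
  have hsplit : ∫⁻ x, f x ∂μ = ∫⁻ x, (f x ^ u) * (f x ^ (1 - u)) ∂μ := by
    refine lintegral_congr fun x => ?_
    rw [← ENNReal.rpow_add_of_nonneg u (1 - u) hu0 h1u0]
    norm_num
  have holder := ENNReal.lintegral_mul_le_Lp_mul_Lq μ hconj
    (hfmeas.pow_const u) (hfmeas.pow_const (1 - u))
  have hexp1 : ∀ x, (f x ^ u) ^ (2 - r) = f x ^ r := by
    intro x
    rw [← ENNReal.rpow_mul]
    congr 1
    rw [hudef]
    field_simp
  have hexp2 : ∀ x, (f x ^ (1 - u)) ^ ((2 - r)/(1 - r)) = f x ^ (2 : ℝ) := by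
    intro x
    rw [← ENNReal.rpow_mul]
    congr 1
    rw [hudef]
    field_simp
    ring
  have hIntr : Integrable (fun x => p x ^ r) μ := by
    have hg : Integrable (fun x => 1 + |p x|) μ :=
      (integrable_const 1).add hpint.abs
    refine hg.mono ?_ ?_
    · have hcont : Continuous fun x : ℝ => x ^ r := by
        rw [continuous_iff_continuousAt]
        exact fun x => Real.continuousAt_rpow_const x r (Or.inr hr0.le)
      exact hcont.comp_aestronglyMeasurable hp.1
    · filter_upwards [hpnn] with x hx
      have h1 : 0 ≤ p x ^ r := Real.rpow_nonneg hx r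
      rw [Real.norm_eq_abs, Real.norm_eq_abs, abs_of_nonneg h1,
        abs_of_nonneg (by positivity : (0:ℝ) ≤ 1 + |p x|)]
      rcases le_total (p x) 1 with h | h
      · have := Real.rpow_le_one hx h hr0.le
        have := abs_nonneg (p x)
        linarith
      · have h2 : p x ^ r ≤ p x ^ (1 : ℝ) :=
          Real.rpow_le_rpow_of_exponent_le h hr1.le
        rw [Real.rpow_one] at h2
        rw [abs_of_nonneg hx]
        linarith
  have hfr : ∫⁻ x, f x ^ r ∂μ = ENNReal.ofReal (∫ x, p x ^ r ∂μ) := by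
    rw [ofReal_integral_eq_lintegral_ofReal hIntr
      (by filter_upwards [hpnn] with x hx; exact Real.rpow_nonneg hx r)]
    refine lintegral_congr_ae ?_
    filter_upwards [hpnn] with x hx
    rw [hfdef]
    exact ENNReal.ofReal_rpow_of_nonneg hx hr0.le
  have hf2 : ∫⁻ x, f x ^ (2 : ℝ) ∂μ = S ^ (2 : ℝ) := by
    have hS : S = (∫⁻ x, ‖p x‖ₑ ^ (2:ℝ) ∂μ) ^ ((1:ℝ)/2) := by
      rw [hSdef, eLpNorm_eq_lintegral_rpow_enorm_toReal (by norm_num) (by norm_num)]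
      norm_num
    have hae : ∫⁻ x, f x ^ (2:ℝ) ∂μ = ∫⁻ x, ‖p x‖ₑ ^ (2:ℝ) ∂μ := by
      refine lintegral_congr_ae ?_
      filter_upwards [hpnn] with x hx
      rw [hfdef, Real.enorm_eq_ofReal hx]
    rw [hae, hS, ← ENNReal.rpow_mul]
    norm_num
  have h1 : (∫⁻ x, (f x ^ u) ^ (2 - r) ∂μ) ^ (1/(2-r))
      ≤ ENNReal.ofReal c₀ ^ ((2 - r)⁻¹) := by
    rw [one_div]
    refine ENNReal.rpow_le_rpow ?_ (by positivity)
    calc ∫⁻ x, (f x ^ u) ^ (2 - r) ∂μ = ∫⁻ x, f x ^ r ∂μ :=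
          lintegral_congr fun x => hexp1 x
      _ = ENNReal.ofReal (∫ x, p x ^ r ∂μ) := hfr
      _ ≤ ENNReal.ofReal c₀ :=
          ENNReal.ofReal_le_ofReal (le_trans hintr (le_max_left _ _))
  have h2 : (∫⁻ x, (f x ^ (1-u)) ^ ((2-r)/(1-r)) ∂μ) ^ (1/((2-r)/(1-r)))
      = S ^ t := by
    have h2a : ∫⁻ x, (f x ^ (1-u)) ^ ((2-r)/(1-r)) ∂μ = S ^ (2:ℝ) := by
      rw [← hf2]; exact lintegral_congr fun x => hexp2 x
    rw [h2a, ← ENNReal.rpow_mul]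
    congr 1
    rw [htdef, one_div, inv_div]
    ring
  have hBennreal : ENNReal.ofReal I ≤
      ENNReal.ofReal c₀ ^ ((2 - r)⁻¹) * S ^ t := by
    have hstep : ∫⁻ x, f x ∂μ ≤ (∫⁻ x, (f x ^ u) ^ (2-r) ∂μ) ^ (1/(2-r)) *
        (∫⁻ x, (f x ^ (1-u)) ^ ((2-r)/(1-r)) ∂μ) ^ (1/((2-r)/(1-r))) := by
      rw [hsplit]
      exact holder
    rw [hIeq]
    refine hstep.trans ?_
    rw [h2]
    exact mul_le_mul_left h1 _
  have hB : I ≤ c₀ ^ ((2 - r)⁻¹) * N ^ t := by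
    have hfin : ENNReal.ofReal c₀ ^ ((2 - r)⁻¹) * S ^ t ≠ ⊤ := by
      refine ENNReal.mul_ne_top ?_ ?_
      · exact ENNReal.rpow_ne_top_of_nonneg (by positivity) ENNReal.ofReal_ne_top
      · exact ENNReal.rpow_ne_top_of_nonneg ht0.le hSfin
    have := ENNReal.toReal_le_toReal ENNReal.ofReal_ne_top hfin |>.mpr hBennreal
    rw [ENNReal.toReal_ofReal hI0, ENNReal.toReal_mul, ← ENNReal.toReal_rpow,
      ← ENNReal.toReal_rpow, ENNReal.toReal_ofReal hc₀] at this
    exact this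
  -- Step A : triangle inequality
  have hdiffmem : MemLp (fun x => p x - M) 2 μ := hp.sub (memLp_const M)
  have htri : S ≤ eLpNorm (fun x => p x - M) 2 μ + eLpNorm (fun _ => M) 2 μ := by
    have heq : ((fun x => p x - M) + fun _ => M) = p := by
      funext x
      simp
    calc S = eLpNorm ((fun x => p x - M) + fun _ => M) 2 μ := by rw [heq]
      _ ≤ _ := eLpNorm_add_le (hp.1.sub aestronglyMeasurable_const)
          aestronglyMeasurable_const one_le_two
  have hconst : eLpNorm (fun _ => M) 2 μ = ‖M‖₊ * volume Ω ^ ((1:ℝ)/2) := by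
    rw [eLpNorm_const M (by norm_num) hμne, hμuniv]
    norm_num
    rfl
  have hconstfin : eLpNorm (fun _ => M) 2 μ ≠ ⊤ := (memLp_const M).2.ne
  have hA : N ≤ (eLpNorm (fun x => p x - M) 2 μ).toReal + M * V ^ ((1:ℝ)/2) := by
    have h1 : N ≤ (eLpNorm (fun x => p x - M) 2 μ + eLpNorm (fun _ => M) 2 μ).toReal := by
      refine ENNReal.toReal_le_toReal hSfin ?_ |>.mpr htri
      exact ENNReal.add_ne_top.mpr ⟨hdiffmem.2.ne, hconstfin⟩
    rw [ENNReal.toReal_add hdiffmem.2.ne hconstfin] at h1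
    refine le_trans h1 ?_
    rw [hconst, ENNReal.toReal_mul, ← ENNReal.toReal_rpow]
    simp only [ENNReal.coe_toReal, coe_nnnorm, Real.norm_eq_abs, abs_of_nonneg hM0]
    try rw [← hVdef]
  -- combine
  have hcomb : N ≤ a * N ^ r + b + K * N ^ t := by
    have hM_le : M ≤ V⁻¹ * (c₀ ^ ((2 - r)⁻¹) * N ^ t) := by
      rw [hMdef, ← hVdef]
      exact mul_le_mul_of_nonneg_left hB (by positivity)
    have hV12 : (0:ℝ) ≤ V ^ ((1:ℝ)/2) := by positivity
    have := mul_le_mul_of_nonneg_right hM_le hV12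
    calc N ≤ (eLpNorm (fun x => p x - M) 2 μ).toReal + M * V ^ ((1:ℝ)/2) := hA
      _ ≤ (a * N ^ r + b) + V⁻¹ * (c₀ ^ ((2 - r)⁻¹) * N ^ t) * V ^ ((1:ℝ)/2) := by
          have hmean' := hmean
          exact add_le_add hmean' this
      _ = a * N ^ r + b + K * N ^ t := by rw [hKdef]; ring
  -- conclude
  rcases le_or_gt N 1 with hN1 | hN1
  · exact le_trans hN1 (le_max_left _ _)
  · have hNpos : (0:ℝ) < N := by linarith
    have h1 : N ^ r ≤ N ^ s := Real.rpow_le_rpow_of_exponent_le hN1.le (le_max_left _ _)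
    have h2 : N ^ t ≤ N ^ s := Real.rpow_le_rpow_of_exponent_le hN1.le (le_max_right _ _)
    have h3 : (1:ℝ) ≤ N ^ s := Real.one_le_rpow hN1.le hs0.le
    have h4 : b ≤ |b| * N ^ s := by
      calc b ≤ |b| := le_abs_self b
        _ = |b| * 1 := (mul_one _).symm
        _ ≤ |b| * N ^ s := by
            exact mul_le_mul_of_nonneg_left h3 (abs_nonneg b)
    have hENs : N ≤ E * N ^ s := by
      have ha' : a * N ^ r ≤ a * N ^ s := mul_le_mul_of_nonneg_left h1 ha.le
      have hK' : K * N ^ t ≤ K * N ^ s := mul_le_mul_of_nonneg_left h2 hK0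
      calc N ≤ a * N ^ r + b + K * N ^ t := hcomb
        _ ≤ a * N ^ s + |b| * N ^ s + K * N ^ s := by linarith
        _ = E * N ^ s := by rw [hEdef]; ring
    have hNs_pos : (0:ℝ) < N ^ s := Real.rpow_pos_of_pos hNpos s
    have h5 : N ^ (1 - s) ≤ E := by
      rw [Real.rpow_sub hNpos, Real.rpow_one, div_le_iff₀ hNs_pos]
      exact hENs
    have h6 : N = (N ^ (1 - s)) ^ ((1 - s)⁻¹) := by
      rw [← Real.rpow_mul hN0, mul_inv_cancel₀ (by linarith : (1:ℝ) - s ≠ 0),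
        Real.rpow_one]
    calc N = (N ^ (1 - s)) ^ ((1 - s)⁻¹) := h6
      _ ≤ E ^ ((1 - s)⁻¹) := Real.rpow_le_rpow (Real.rpow_nonneg hN0 _) h5 (inv_nonneg.mpr (by linarith))
      _ ≤ max 1 (E ^ ((1 - s)⁻¹)) := le_max_right _ _
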